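/- Let k ≥ 1 be an integer and let x be a real number with 1 ≤ x ≤ k. Then k! · (F_k(x) − F_k(x−1)) = Σ_{j=0}^{⌊x⌋} (−1)^j · binom(k+1, j) · (x−j)^k. -/
import Mathlib


/-- The cumulative distribution function of the Irwin–Hall distribution:
`F k x = (1/k!) · Σ_{j=0}^{⌊x⌋} (-1)^j · binom(k,j) · (x-j)^k` for `x ≥ 0`, and `0` for
`x < 0`. -/
noncomputable def irwinHallF (k : ℕ) (x : ℝ) : ℝ :=
  if x < 0 then 0
  else (1 / (k.factorial : ℝ)) *
    ∑ j ∈ Finset.range (⌊x⌋.toNat + 1), (-1 : ℝ) ^ j * (k.choose j : ℝ) * (x - j) ^ k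

/-- for `1 ≤ x ≤ k`,
`k! · (F_k(x) − F_k(x−1)) = Σ_{j=0}^{⌊x⌋} (−1)^j · binom(k+1, j) · (x−j)^k`. -/
theorem stmt12 (k : ℕ) (hk : 1 ≤ k) (x : ℝ) (hx1 : 1 ≤ x) (hxk : x ≤ k) :
    (k.factorial : ℝ) * (irwinHallF k x - irwinHallF k (x - 1)) =
    ∑ j ∈ Finset.range (⌊x⌋.toNat + 1), (-1 : ℝ) ^ j * ((k + 1).choose j : ℝ) * (x - j) ^ k := by
  have h0 : ¬ x < 0 := by linarith
  have h1 : ¬ x - 1 < 0 := by linarith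
  have hfl : (1 : ℤ) ≤ ⌊x⌋ := by
    exact_mod_cast Int.le_floor.mpr (by exact_mod_cast hx1)
  obtain ⟨m, hm⟩ : ∃ m, ⌊x⌋.toNat = m + 1 := by
    refine ⟨⌊x⌋.toNat - 1, ?_⟩
    omega
  have hfl1 : ⌊x - 1⌋.toNat = m := by
    have : ⌊x - 1⌋ = ⌊x⌋ - 1 := by
      simpa using Int.floor_sub_int x 1
    omega
  have hfac : (k.factorial : ℝ) ≠ 0 := by positivity
  rw [irwinHallF, irwinHallF, if_neg h0, if_neg h1, hfl1, hm, mul_sub,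
    ← mul_assoc, ← mul_assoc, mul_one_div_cancel hfac, one_mul, one_mul,
    Finset.sum_range_succ' _ (m + 1), Finset.sum_range_succ' _ (m + 1)]
  rw [show (∑ j ∈ Finset.range (m + 1),
      (-1 : ℝ) ^ j * (k.choose j : ℝ) * (x - 1 - j) ^ k) =
      ∑ i ∈ Finset.range (m + 1),
      ((-1 : ℝ) ^ (i + 1) * (k.choose (i + 1) : ℝ) * (x - ↑(i + 1)) ^ k
        - (-1 : ℝ) ^ (i + 1) * ((k + 1).choose (i + 1) : ℝ) * (x - ↑(i + 1)) ^ k) from ?_]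
  · rw [Finset.sum_sub_distrib]
    simp
    ring
  · refine Finset.sum_congr rfl fun i _ => ?_
    rw [Nat.choose_succ_succ]
    push_cast
    ring
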